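/- Fix ε, λ, μ > 0 with μλ < log((1 + √(1 + 4ε²/λ²))/(−1 + √(1 + 4ε²/λ²))). Set a = 1 − λ/(λ/2 + √(λ²/4 + ε²)). Then a ∈ (0,1), and the function φ : (0,1] → ℝ defined by φ(t) = (n + 1/2)λ − √(λ²/4 + ε²) for t ∈ (a^{n+1}, a^n], n ≥ 0, satisfies: e^{μφ} is integrable on (0,1], and ∫₀¹ e^{μφ(t)} dt = (λ / (λ/2 + √(λ²/4+ε²) + (λ/2 − √(λ²/4+ε²))e^{λμ})) · e^{μ(λ/2 − √(λ²/4+ε²))}. -/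

import Mathlib

open Set MeasureTheory

theorem extremal_step_function_integral
    (ε lam μ a : ℝ) (hε : 0 < ε) (hlam : 0 < lam) (hμ : 0 < μ)
    (hcond : μ * lam < Real.log ((1 + Real.sqrt (1 + 4 * ε^2 / lam^2)) /
      (-1 + Real.sqrt (1 + 4 * ε^2 / lam^2))))
    (ha : a = 1 - lam / (lam / 2 + Real.sqrt (lam^2 / 4 + ε^2)))
    (φ : ℝ → ℝ)
    (hφ : ∀ n : ℕ, ∀ t ∈ Set.Ioc (a^(n+1)) (a^n),
      φ t = ((n : ℝ) + 1/2) * lam - Real.sqrt (lam^2 / 4 + ε^2)) :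
    a ∈ Set.Ioo (0:ℝ) 1 ∧
    IntegrableOn (fun t => Real.exp (μ * φ t)) (Set.Ioc (0:ℝ) 1) ∧
    ∫ t in Set.Ioc (0:ℝ) 1, Real.exp (μ * φ t) =
      (lam / (lam / 2 + Real.sqrt (lam^2 / 4 + ε^2) +
        (lam / 2 - Real.sqrt (lam^2 / 4 + ε^2)) * Real.exp (lam * μ))) *
      Real.exp (μ * (lam / 2 - Real.sqrt (lam^2 / 4 + ε^2))) := by
  set s := Real.sqrt (lam^2 / 4 + ε^2) with hs_def
  have hsq : s^2 = lam^2/4 + ε^2 := Real.sq_sqrt (by positivity)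
  have hs_gt : lam/2 < s := by
    rw [hs_def]
    exact (Real.lt_sqrt (by positivity)).2 (by nlinarith)
  have hs_pos : 0 < s := by linarith
  have hden : (0:ℝ) < s + lam/2 := by linarith
  have hnum : (0:ℝ) < s - lam/2 := by linarith
  have ha' : a = (s - lam/2)/(s + lam/2) := by
    rw [ha]; field_simp; ring
  have ha0 : 0 < a := by rw [ha']; positivity
  have ha1 : a < 1 := by rw [ha', div_lt_one hden]; linarith
  set E := Real.exp (μ * lam) with hE_def
  have hEpos : 0 < E := Real.exp_pos _
  -- the geometric ratio is < 1
  have h2s : Real.sqrt (1 + 4 * ε^2 / lam^2) = 2*s/lam := by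
    rw [show (1:ℝ) + 4 * ε^2 / lam^2 = (2*s/lam)^2 by
      field_simp; nlinarith]
    exact Real.sqrt_sq (by positivity)
  have hargs : (1 + 2*s/lam) / (-1 + 2*s/lam) = (s + lam/2)/(s - lam/2) := by
    have hpos2 : (0:ℝ) < -1 + 2*s/lam := by
      have h : (1:ℝ) < 2*s/lam := (one_lt_div hlam).2 (by linarith)
      linarith
    rw [div_eq_div_iff hpos2.ne' hnum.ne']
    field_simp
    ring
  have hElt : E < (s + lam/2)/(s - lam/2) := by
    rw [hE_def, ← Real.lt_log_iff_exp_lt (by positivity), ← hargs, ← h2s]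
    exact hcond
  have hr : a * E < 1 := by
    have h1 : a * E < a * ((s + lam/2)/(s - lam/2)) :=
      mul_lt_mul_of_pos_left hElt ha0
    have h2 : a * ((s + lam/2)/(s - lam/2)) = 1 := by
      rw [ha', div_mul_div_comm, div_eq_one_iff_eq (by positivity)]; ring
    linarith
  have hrpos : (0:ℝ) ≤ a * E := by positivity
  -- the pieces
  set S : ℕ → Set ℝ := fun n => Set.Ioc (a^(n+1)) (a^n) with hS_def
  have hanti : Antitone fun n : ℕ => a ^ n := fun m n hmn =>
    pow_le_pow_of_le_one ha0.le ha1.le hmn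
  have hdisj : Pairwise (Function.onFun Disjoint S) := by
    have := hanti.pairwise_disjoint_on_Ioc_succ
    simpa [hS_def, Order.succ_eq_add_one] using this
  have hmeas : ∀ n, MeasurableSet (S n) := fun n => measurableSet_Ioc
  have hcov : ⋃ n, S n = Set.Ioc (0:ℝ) 1 := by
    ext t
    simp only [hS_def, mem_iUnion, mem_Ioc]
    constructor
    · rintro ⟨n, h1, h2⟩
      exact ⟨(pow_pos ha0 (n+1)).trans h1, h2.trans (pow_le_one₀ ha0.le ha1.le)⟩
    · rintro ⟨ht0, ht1⟩
      have hex : ∃ n, a^(n+1) < t := by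
        obtain ⟨n, hn⟩ := exists_pow_lt_of_lt_one ht0 ha1
        exact ⟨n, lt_of_le_of_lt (hanti (Nat.le_succ n)) hn⟩
      refine ⟨Nat.find hex, Nat.find_spec hex, ?_⟩
      rcases Nat.eq_zero_or_pos (Nat.find hex) with h0 | h0
      · rw [h0]; simpa using ht1
      · have hm := Nat.find_min hex (m := Nat.find hex - 1) (by omega)
        rw [Nat.sub_add_cancel h0] at hm
        exact not_lt.1 hm
  set C := Real.exp (μ * (lam/2 - s)) with hC_def
  have hCpos : 0 < C := Real.exp_pos _
  have hval : ∀ n : ℕ, ∀ t ∈ S n, Real.exp (μ * φ t) = C * E^n := by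
    intro n t ht
    rw [hφ n t ht, hC_def, hE_def, ← Real.exp_nat_mul, ← Real.exp_add]
    congr 1
    push_cast
    ring
  have hpow_le : ∀ n : ℕ, a^(n+1) ≤ a^n := fun n => hanti (Nat.le_succ n)
  -- integrability on the union
  have hInt : IntegrableOn (fun t => Real.exp (μ * φ t)) (⋃ n, S n) := by
    constructor
    · rw [aestronglyMeasurable_iUnion_iff]
      intro n
      refine (aestronglyMeasurable_const (b := C * E^n)).congr ?_
      exact (ae_restrict_iff' (hmeas n)).2 (ae_of_all _ fun t ht => (hval n t ht).symm)
    · rw [HasFiniteIntegral, lintegral_iUnion hmeas hdisj]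
      have hpiece : ∀ n : ℕ, ∫⁻ t in S n, ‖Real.exp (μ * φ t)‖ₑ
          = ENNReal.ofReal (C * E^n) * ENNReal.ofReal (a^n - a^(n+1)) := by
        intro n
        rw [setLIntegral_congr_fun (hmeas n)
          (fun t ht => by
            rw [hval n t ht, Real.enorm_eq_ofReal (by positivity)]),
          setLIntegral_const, hS_def]
        rw [Real.volume_Ioc]
      simp only [hpiece]
      have hbound : ∀ n : ℕ,
          ENNReal.ofReal (C * E^n) * ENNReal.ofReal (a^n - a^(n+1))
          ≤ ENNReal.ofReal C * ENNReal.ofReal (a*E) ^ n := by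
        intro n
        rw [← ENNReal.ofReal_mul (by positivity), ← ENNReal.ofReal_pow hrpos,
          ← ENNReal.ofReal_mul hCpos.le]
        apply ENNReal.ofReal_le_ofReal
        have h1 : a^n - a^(n+1) ≤ a^n := by
          have := pow_pos ha0 (n+1); linarith
        calc C * E^n * (a^n - a^(n+1)) ≤ C * E^n * a^n := by
              apply mul_le_mul_of_nonneg_left h1 (by positivity)
          _ = C * (a*E)^n := by rw [mul_pow]; ring
      refine lt_of_le_of_lt (ENNReal.tsum_le_tsum hbound) ?_
      rw [ENNReal.tsum_mul_left, ENNReal.tsum_geometric]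
      exact ENNReal.mul_lt_top ENNReal.ofReal_lt_top
        (ENNReal.inv_lt_top.2 (tsub_pos_of_lt (ENNReal.ofReal_lt_one.2 hr)))
  refine ⟨⟨ha0, ha1⟩, hcov ▸ hInt, ?_⟩
  rw [← hcov, integral_iUnion hmeas hdisj hInt]
  have hint : ∀ n : ℕ, ∫ t in S n, Real.exp (μ * φ t) = (C*(1-a)) * (a*E)^n := by
    intro n
    rw [setIntegral_congr_fun (hmeas n) (hval n), setIntegral_const, hS_def,
      Real.volume_real_Ioc_of_le (hpow_le n), smul_eq_mul,
      mul_pow, pow_succ]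
    ring
  simp only [hint]
  rw [tsum_mul_left, tsum_geometric_of_lt_one hrpos hr]
  have hEl : Real.exp (lam*μ) = E := by rw [hE_def, mul_comm]
  have h1r : (0:ℝ) < 1 - a*E := by linarith
  rw [hEl, ha'] at *
  have h1r' : 1 - (s - lam/2)/(s + lam/2)*E ≠ 0 := h1r.ne'
  rw [inv_eq_one_div]
  field_simp
  ring
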